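/- Let $N \ge 3$, $m > 1$, $p > m$, $0 < k_1 \le k_2$, and suppose $r_0 > e$ with $\frac{k_2}{k_1} < (N-2)(m-1)\frac{p-m}{p-1}\log r_0$. Then there exist $\omega > 0$ and $C > 0$ such that both of the following hold: (i) $\frac{p-m}{p-1} \ge \omega\,\frac{m}{m-1}\,\frac{k_2}{\log r_0}$; (ii) $\omega\,\frac{m}{m-1}\left[k_1(N-2) - \frac{k_2}{(m-1)\log r_0}\right] \ge C^{p-1} + \frac{1}{p-1}$. -/

import Mathlib

theorem param_selection_q2_super (N : ℕ) (m p k₁ k₂ r₀ : ℝ) (hN : 3 ≤ N)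
    (hm : 1 < m) (hp : m < p) (hk₁ : 0 < k₁) (hk : k₁ ≤ k₂)
    (hr₀ : Real.exp 1 < r₀)
    (hC : k₂ / k₁ < (N - 2) * (m - 1) * ((p - m) / (p - 1)) * Real.log r₀) :
    ∃ ω > (0 : ℝ), ∃ C > (0 : ℝ),
      (p - m) / (p - 1) ≥ ω * (m / (m - 1)) * (k₂ / Real.log r₀) ∧
      ω * (m / (m - 1)) * (k₁ * (N - 2) - k₂ / ((m - 1) * Real.log r₀))
        ≥ C ^ (p - 1) + 1 / (p - 1) := by
  set L := Real.log r₀ with hLdef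
  have hL1 : 1 < L := by
    have := Real.log_lt_log (Real.exp_pos 1) hr₀
    simpa using this
  have hL0 : (0:ℝ) < L := lt_trans one_pos hL1
  have hm1 : (0:ℝ) < m - 1 := by linarith
  have hpm : (0:ℝ) < p - m := by linarith
  have hp1 : (0:ℝ) < p - 1 := by linarith
  have hm0 : (0:ℝ) < m := by linarith
  have hk2 : (0:ℝ) < k₂ := lt_of_lt_of_le hk₁ hk
  have hN2 : (1:ℝ) ≤ (N:ℝ) - 2 := by
    have : (3:ℝ) ≤ (N:ℝ) := by exact_mod_cast hN
    linarith
  have hN2' : (0:ℝ) < (N:ℝ) - 2 := lt_of_lt_of_le one_pos hN2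
  set ω := ((p-m)/(p-1)) * ((m-1)/m) * (L/k₂) with hω
  have hω0 : 0 < ω := by positivity
  have hKey : k₂ * (p-1) < k₁ * ((N:ℝ)-2) * (m-1) * (p-m) * L := by
    rw [div_lt_iff₀ hk₁] at hC
    have h2 : (((N:ℝ)-2) * (m-1) * ((p-m)/(p-1)) * L) * k₁ * (p-1)
        = k₁ * ((N:ℝ)-2) * (m-1) * (p-m) * L := by
      field_simp
    nlinarith [mul_lt_mul_of_pos_right hC hp1]
  set A := k₁ * ((N:ℝ)-2) - k₂ / ((m-1)*L) with hA
  have hEq1 : ω * (m/(m-1)) * (k₂ / L) = (p-m)/(p-1) := by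
    rw [hω]; field_simp
  have expand : ω * (m/(m-1)) * A
      = ((p-m)*L*(k₁*((N:ℝ)-2)*(m-1)*L - k₂)) / ((p-1)*k₂*(m-1)*L) := by
    rw [hω, hA]; field_simp
  have hS : 1/(p-1) < ω * (m/(m-1)) * A := by
    rw [expand, div_lt_div_iff₀ hp1 (by positivity)]
    nlinarith [mul_lt_mul_of_pos_right (mul_lt_mul_of_pos_right hKey hL0) hp1]
  set S := ω * (m/(m-1)) * A - 1/(p-1) with hSdef
  have hS0 : 0 < S := by simp only [hSdef]; linarith
  refine ⟨ω, hω0, S ^ (1/(p-1)), Real.rpow_pos_of_pos hS0 _, hEq1.le, ?_⟩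
  have hpow : (S ^ (1/(p-1))) ^ (p-1) = S := by
    rw [← Real.rpow_mul hS0.le, one_div_mul_cancel hp1.ne', Real.rpow_one]
  rw [hpow]
  simp only [hSdef]
  linarith
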